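/- Let $f = \sum_{(\sigma,i) \in \mathbf{B}} c(\sigma,i) \cdot \frac{1}{\lambda(A(\sigma,i))} \cdot e(\sigma,i) \cdot \chi_{A(\sigma,i)}$ be a basic function with values in $\ell_2$. Then $f$ is Pettis integrable if and only if $\sum_{(\sigma,i) \in \mathbf{B}} c(\sigma,i)^2 < \infty$, and in that case $\|\int_{[0,1]} f\| = \sqrt{\sum_{(\sigma,i) \in \mathbf{B}} c(\sigma,i)^2}$. -/

import Mathlib

open MeasureTheory
open scoped Classical

noncomputable section

/-- The Hilbert space `ℓ₂` of square-summable real sequences. -/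
abbrev H2 : Type := lp (fun _ : ℕ => ℝ) 2

/-- The index set `B = {(σ,i) : σ ∈ {0,1}^{<∞}, 0 ≤ i ≤ |σ|}`. -/
def Bidx : Type := Σ σ : List Bool, Fin (σ.length + 1)

/-- Left endpoint of the dyadic interval `I_σ`. -/
noncomputable def dyadicLeft (σ : List Bool) : ℝ :=
  ∑ i ∈ Finset.range σ.length, if σ.getD i false then (2:ℝ)⁻¹ ^ (i+1) else 0

/-- The dyadic interval `I_σ ⊆ [0,1]` of length `2^{-|σ|}`: `I_∅ = [0,1]`,
`I_{σ0}` is the left half and `I_{σ1}` the right half of `I_σ`. -/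
noncomputable def dyadicInterval (σ : List Bool) : Set ℝ :=
  Set.Icc (dyadicLeft σ) (dyadicLeft σ + (2:ℝ)⁻¹ ^ σ.length)

/-- `f` is Pettis integrable with respect to `μ`: every continuous functional composed with
`f` is integrable, and over each measurable set there is a vector representing the integrals. -/
def PettisIntegrable {X : Type} [NormedAddCommGroup X] [NormedSpace ℝ X]
    (f : ℝ → X) (μ : MeasureTheory.Measure ℝ) : Prop :=
  (∀ φ : X →L[ℝ] ℝ, MeasureTheory.Integrable (fun t => φ (f t)) μ) ∧
  ∀ E : Set ℝ, MeasurableSet E → ∃ v : X, ∀ φ : X →L[ℝ] ℝ, φ v = ∫ t in E, φ (f t) ∂μ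

/-- `v` is the Pettis integral of `f` over the set `E` (w.r.t. `μ`). -/
def IsPettisIntegralOn {X : Type} [NormedAddCommGroup X] [NormedSpace ℝ X]
    (f : ℝ → X) (μ : MeasureTheory.Measure ℝ) (E : Set ℝ) (v : X) : Prop :=
  ∀ φ : X →L[ℝ] ℝ, φ v = ∫ t in E, φ (f t) ∂μ

/-- The basic function `f = ∑_{(σ,i) ∈ B} c(σ,i) (1/λ(A(σ,i))) e(σ,i) χ_{A(σ,i)}`. -/
noncomputable def basicFun {X : Type} [NormedAddCommGroup X] [NormedSpace ℝ X]
    (c : Bidx → ℝ) (A : Bidx → Set ℝ) (e : Bidx → X) : ℝ → X :=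
  fun t => ∑' p : Bidx,
    Set.indicator (A p) (fun _ => ((MeasureTheory.volume (A p)).toReal)⁻¹ • (c p • e p)) t

/-- The restriction `f_{|τ}`: the subseries of the basic function over indices `(σ,i)`
with `σ` an extension of `τ`. -/
noncomputable def basicFunRes {X : Type} [NormedAddCommGroup X] [NormedSpace ℝ X]
    (τ : List Bool) (c : Bidx → ℝ) (A : Bidx → Set ℝ) (e : Bidx → X) : ℝ → X :=
  basicFun (fun p => if τ <+: p.1 then c p else 0) A e


section Aux

open Filter Topology
open scoped ENNReal NNReal

instance : Countable Bidx := by unfold Bidx; infer_instance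
instance : Nonempty Bidx := ⟨⟨[], 0⟩⟩

lemma geom_sum_half (n : ℕ) :
    ∑ i ∈ Finset.range n, (2:ℝ)⁻¹ ^ (i+1) = 1 - (2:ℝ)⁻¹ ^ n := by
  induction n with
  | zero => simp
  | succ n ih => rw [Finset.sum_range_succ, ih]; ring

lemma dyadic_subset (σ : List Bool) : dyadicInterval σ ⊆ Set.Icc (0:ℝ) 1 := by
  intro x hx
  obtain ⟨h1, h2⟩ := hx
  have hL0 : 0 ≤ dyadicLeft σ := by
    apply Finset.sum_nonneg
    intro i _
    split
    · positivity
    · exact le_rfl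
  have hL1 : dyadicLeft σ ≤ 1 - (2:ℝ)⁻¹ ^ σ.length := by
    rw [← geom_sum_half]
    apply Finset.sum_le_sum
    intro i _
    split
    · exact le_rfl
    · positivity
  have hp : (0:ℝ) < (2:ℝ)⁻¹ ^ σ.length := by positivity
  exact ⟨by linarith, by linarith⟩

lemma basicFun_eq_of_mem (c : Bidx → ℝ) (A : Bidx → Set ℝ) (e : Bidx → H2)
    (hdisj : ∀ p q : Bidx, p ≠ q → Disjoint (A p) (A q)) {t : ℝ} {p : Bidx} (ht : t ∈ A p) :
    basicFun c A e t = ((volume (A p)).toReal)⁻¹ • (c p • e p) := by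
  unfold basicFun
  rw [tsum_eq_single p]
  · rw [Set.indicator_of_mem ht]
  · intro q hq
    exact Set.indicator_of_notMem
      (fun htq => Set.disjoint_left.mp (hdisj q p hq) htq ht) _

lemma basicFun_eq_zero (c : Bidx → ℝ) (A : Bidx → Set ℝ) (e : Bidx → H2)
    {t : ℝ} (ht : ∀ p, t ∉ A p) : basicFun c A e t = 0 := by
  unfold basicFun
  have : ∀ p : Bidx,
      Set.indicator (A p) (fun _ => ((volume (A p)).toReal)⁻¹ • (c p • e p)) t = 0 :=
    fun p => Set.indicator_of_notMem (ht p) _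
  simp only [this, tsum_zero]

lemma basicFun_stronglyMeasurable (c : Bidx → ℝ) (A : Bidx → Set ℝ) (e : Bidx → H2)
    (hAc : ∀ p, IsClosed (A p)) (hdisj : ∀ p q : Bidx, p ≠ q → Disjoint (A p) (A q)) :
    StronglyMeasurable (basicFun c A e) := by
  obtain ⟨g, hg⟩ := exists_surjective_nat Bidx
  apply stronglyMeasurable_of_tendsto (f := fun n t => ∑ p ∈ (Finset.range n).image g,
      Set.indicator (A p) (fun _ => ((volume (A p)).toReal)⁻¹ • (c p • e p)) t) Filter.atTop
  · intro n
    apply Finset.stronglyMeasurable_fun_sum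
    intro p _
    exact stronglyMeasurable_const.indicator (hAc p).measurableSet
  · rw [tendsto_pi_nhds]
    intro t
    by_cases h : ∃ p, t ∈ A p
    · obtain ⟨p, hp⟩ := h
      obtain ⟨N, rfl⟩ := hg p
      rw [basicFun_eq_of_mem c A e hdisj hp]
      apply tendsto_atTop_of_eventually_const (i₀ := N + 1)
      intro n hn
      rw [Finset.sum_eq_single_of_mem (g N)
        (Finset.mem_image_of_mem g (Finset.mem_range.mpr hn))]
      · exact Set.indicator_of_mem hp _
      · intro q _ hqp
        exact Set.indicator_of_notMem
          (fun htq => Set.disjoint_left.mp (hdisj q (g N) hqp) htq hp) _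
    · push_neg at h
      rw [basicFun_eq_zero c A e h]
      refine Tendsto.congr (fun n => ?_) tendsto_const_nhds
      exact (Finset.sum_eq_zero (fun p _ => Set.indicator_of_notMem (h p) _)).symm

lemma integral_basicFun (A : Bidx → Set ℝ) (hAc : ∀ p, IsClosed (A p))
    (hdisj : ∀ p q : Bidx, p ≠ q → Disjoint (A p) (A q)) (c : Bidx → ℝ) (e : Bidx → H2)
    (ν : Measure ℝ) (φ : H2 →L[ℝ] ℝ)
    (hint : Integrable (fun t => φ (basicFun c A e t)) ν) :
    HasSum (fun p => (ν (A p)).toReal * φ (((volume (A p)).toReal)⁻¹ • (c p • e p)))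
      (∫ t, φ (basicFun c A e t) ∂ν) := by
  have h1 : ∫ t, φ (basicFun c A e t) ∂ν
      = ∫ t in ⋃ p, A p, φ (basicFun c A e t) ∂ν := by
    refine (setIntegral_eq_integral_of_forall_compl_eq_zero (fun t ht => ?_)).symm
    have ht' : ∀ p, t ∉ A p := by simpa using ht
    rw [basicFun_eq_zero c A e ht', map_zero]
  rw [h1]
  have h2 := hasSum_integral_iUnion (μ := ν) (f := fun t => φ (basicFun c A e t))
      (fun p => (hAc p).measurableSet) (fun p q hpq => hdisj p q hpq) hint.integrableOn
  have h3 : (fun p => ∫ t in A p, φ (basicFun c A e t) ∂ν)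
      = fun p => (ν (A p)).toReal * φ (((volume (A p)).toReal)⁻¹ • (c p • e p)) := by
    funext p
    rw [setIntegral_congr_fun (hAc p).measurableSet
      (g := fun _ => φ (((volume (A p)).toReal)⁻¹ • (c p • e p)))
      (fun t ht => by rw [basicFun_eq_of_mem c A e hdisj ht]),
      setIntegral_const, smul_eq_mul]
    rfl
  rwa [h3] at h2

lemma orthonormal_summable_smul {e : Bidx → H2} (he : Orthonormal ℝ e) {d : Bidx → ℝ}
    (hd : Summable fun p => d p ^ 2) : Summable fun p => d p • e p := by
  rw [summable_iff_vanishing_norm]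
  intro ε hε
  obtain ⟨s, hs⟩ := summable_iff_vanishing_norm.mp hd (ε ^ 2) (by positivity)
  refine ⟨s, fun t ht => ?_⟩
  have h1 : ‖∑ p ∈ t, d p • e p‖ ^ 2 = ∑ p ∈ t, d p ^ 2 := by
    have h := he.inner_sum d d t
    rw [← real_inner_self_eq_norm_sq]
    simpa [pow_two] using h
  have h2 := hs t ht
  rw [Real.norm_eq_abs] at h2
  have h3 : ∑ p ∈ t, d p ^ 2 < ε ^ 2 := lt_of_abs_lt h2
  have h4 : ‖∑ p ∈ t, d p • e p‖ ^ 2 < ε ^ 2 := h1 ▸ h3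
  exact lt_of_pow_lt_pow_left₀ 2 hε.le h4

lemma integrable_basicFun (A : Bidx → Set ℝ) (hAc : ∀ p, IsClosed (A p))
    (hsub : ∀ p : Bidx, A p ⊆ Set.Icc (0:ℝ) 1) (hApos : ∀ p, 0 < volume (A p))
    (hdisj : ∀ p q : Bidx, p ≠ q → Disjoint (A p) (A q)) (c : Bidx → ℝ) (e : Bidx → H2)
    (φ : H2 →L[ℝ] ℝ) (hs : Summable fun p => |c p * φ (e p)|) :
    Integrable (fun t => φ (basicFun c A e t)) (volume.restrict (Set.Icc 0 1)) := by
  have hvfin : ∀ p, volume (A p) ≠ ⊤ := fun p =>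
    ((measure_mono (hsub p)).trans_lt measure_Icc_lt_top).ne
  have hvpos : ∀ p, 0 < (volume (A p)).toReal := fun p =>
    ENNReal.toReal_pos (hApos p).ne' (hvfin p)
  constructor
  · exact (φ.continuous.comp_stronglyMeasurable
      (basicFun_stronglyMeasurable c A e hAc hdisj)).aestronglyMeasurable
  · show (∫⁻ t, ‖φ (basicFun c A e t)‖₊ ∂(volume.restrict (Set.Icc 0 1))) < ⊤
    have hpt : ∀ t, (‖φ (basicFun c A e t)‖₊ : ℝ≥0∞)
        = ∑' p, Set.indicator (A p)
            (fun _ => (‖φ (((volume (A p)).toReal)⁻¹ • (c p • e p))‖₊ : ℝ≥0∞)) t := by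
      intro t
      by_cases h : ∃ p, t ∈ A p
      · obtain ⟨p, hp⟩ := h
        rw [basicFun_eq_of_mem c A e hdisj hp, tsum_eq_single p
          (fun q hq => Set.indicator_of_notMem
            (fun htq => Set.disjoint_left.mp (hdisj q p hq) htq hp) _),
          Set.indicator_of_mem hp]
      · push_neg at h
        rw [basicFun_eq_zero c A e h]
        have h0 : ∀ p : Bidx, Set.indicator (A p)
            (fun _ => (‖φ (((volume (A p)).toReal)⁻¹ • (c p • e p))‖₊ : ℝ≥0∞)) t = 0 :=
          fun p => Set.indicator_of_notMem (h p) _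
        simp only [h0, tsum_zero, map_zero, nnnorm_zero, ENNReal.coe_zero]
    have hterm : ∀ p : Bidx, (∫⁻ t, Set.indicator (A p)
          (fun _ => (‖φ (((volume (A p)).toReal)⁻¹ • (c p • e p))‖₊ : ℝ≥0∞)) t
          ∂(volume.restrict (Set.Icc 0 1))) = ENNReal.ofReal (|c p * φ (e p)|) := by
      intro p
      rw [lintegral_indicator (hAc p).measurableSet, setLIntegral_const,
        Measure.restrict_apply (hAc p).measurableSet,
        Set.inter_eq_self_of_subset_left (hsub p)]
      have h1 : φ (((volume (A p)).toReal)⁻¹ • (c p • e p))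
          = ((volume (A p)).toReal)⁻¹ * (c p * φ (e p)) := by
        rw [φ.map_smul, φ.map_smul, smul_eq_mul, smul_eq_mul]
      have hv : volume (A p) = ENNReal.ofReal ((volume (A p)).toReal) :=
        (ENNReal.ofReal_toReal (hvfin p)).symm
      calc (‖φ (((volume (A p)).toReal)⁻¹ • (c p • e p))‖₊ : ℝ≥0∞) * volume (A p)
          = ENNReal.ofReal (‖((volume (A p)).toReal)⁻¹ * (c p * φ (e p))‖)
            * ENNReal.ofReal ((volume (A p)).toReal) := by
            rw [← hv, ofReal_norm, enorm_eq_nnnorm, h1]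
        _ = ENNReal.ofReal (‖((volume (A p)).toReal)⁻¹ * (c p * φ (e p))‖
            * (volume (A p)).toReal) := (ENNReal.ofReal_mul (norm_nonneg _)).symm
        _ = ENNReal.ofReal (|c p * φ (e p)|) := by
            rw [Real.norm_eq_abs, abs_mul, abs_inv, abs_of_pos (hvpos p), mul_comm,
              ← mul_assoc, mul_inv_cancel₀ (hvpos p).ne', one_mul]
    calc (∫⁻ t, (‖φ (basicFun c A e t)‖₊ : ℝ≥0∞) ∂(volume.restrict (Set.Icc 0 1)))
        = ∫⁻ t, ∑' p, Set.indicator (A p)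
            (fun _ => (‖φ (((volume (A p)).toReal)⁻¹ • (c p • e p))‖₊ : ℝ≥0∞)) t
            ∂(volume.restrict (Set.Icc 0 1)) := lintegral_congr hpt
      _ = ∑' p, ∫⁻ t, Set.indicator (A p)
            (fun _ => (‖φ (((volume (A p)).toReal)⁻¹ • (c p • e p))‖₊ : ℝ≥0∞)) t
            ∂(volume.restrict (Set.Icc 0 1)) := by
          exact lintegral_tsum (fun p =>
            (measurable_const.indicator (hAc p).measurableSet).aemeasurable)
      _ = ∑' p, ENNReal.ofReal (|c p * φ (e p)|) := tsum_congr hterm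
      _ = ENNReal.ofReal (∑' p, |c p * φ (e p)|) :=
          (ENNReal.ofReal_tsum_of_nonneg (fun p => abs_nonneg _) hs).symm
      _ < ⊤ := ENNReal.ofReal_lt_top

end Aux

/-- Lemma 3.1(1): a basic function with values in `ℓ₂` is Pettis integrable iff
`∑ c(σ,i)² < ∞`, in which case the norm of its integral over `[0,1]` is
`√(∑ c(σ,i)²)`. -/
theorem stmt5 (A : Bidx → Set ℝ) (hAc : ∀ p, IsClosed (A p))
    (hAs : ∀ p : Bidx, A p ⊆ dyadicInterval p.1)
    (hApos : ∀ p, 0 < volume (A p))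
    (hdisj : ∀ p q : Bidx, p ≠ q → Disjoint (A p) (A q))
    (e : Bidx → H2) (he : Orthonormal ℝ e) (c : Bidx → ℝ) :
    (PettisIntegrable (basicFun c A e) (volume.restrict (Set.Icc 0 1)) ↔
      Summable (fun p : Bidx => c p ^ 2)) ∧
    (Summable (fun p : Bidx => c p ^ 2) → ∀ v : H2,
      IsPettisIntegralOn (basicFun c A e) (volume.restrict (Set.Icc 0 1)) (Set.Icc 0 1) v →
      ‖v‖ = Real.sqrt (∑' p : Bidx, c p ^ 2)) := by
  have hsub : ∀ p : Bidx, A p ⊆ Set.Icc (0:ℝ) 1 := fun p => (hAs p).trans (dyadic_subset _)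
  have hmeas : ∀ p : Bidx, MeasurableSet (A p) := fun p => (hAc p).measurableSet
  have hvfin : ∀ p, volume (A p) ≠ ⊤ := fun p =>
    ((measure_mono (hsub p)).trans_lt measure_Icc_lt_top).ne
  have hvpos : ∀ p, 0 < (volume (A p)).toReal := fun p =>
    ENNReal.toReal_pos (hApos p).ne' (hvfin p)
  have hrr : (volume.restrict (Set.Icc (0:ℝ) 1)).restrict (Set.Icc (0:ℝ) 1)
      = volume.restrict (Set.Icc (0:ℝ) 1) := by
    rw [Measure.restrict_restrict measurableSet_Icc, Set.inter_self]
  have hμA : ∀ p : Bidx, (volume.restrict (Set.Icc (0:ℝ) 1)) (A p) = volume (A p) := fun p => by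
    rw [Measure.restrict_apply (hmeas p), Set.inter_eq_self_of_subset_left (hsub p)]
  have hCS : Summable (fun p : Bidx => c p ^ 2) → ∀ φ : H2 →L[ℝ] ℝ,
      Summable fun p => |c p * φ (e p)| := by
    intro hsum φ
    have hy := (InnerProductSpace.toDual ℝ H2).apply_symm_apply φ
    set y := (InnerProductSpace.toDual ℝ H2).symm φ with hydef
    have hφ : ∀ x, φ x = inner ℝ y x := by
      intro x
      conv_lhs => rw [← hy]
      rw [InnerProductSpace.toDual_apply_apply]
    have hb : Summable fun p => (φ (e p)) ^ 2 := by
      have hbe := he.inner_products_summable (x := y)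
      refine hbe.congr fun p => ?_
      rw [Real.norm_eq_abs, sq_abs, ← real_inner_comm, ← hφ (e p)]
    refine Summable.of_nonneg_of_le (fun p => abs_nonneg _) (fun p => ?_)
      ((hsum.add hb).div_const 2)
    have h2 := two_mul_le_add_sq (|c p|) (|φ (e p)|)
    rw [abs_mul]
    have e1 : |c p| ^ 2 = c p ^ 2 := sq_abs _
    have e2 : |φ (e p)| ^ 2 = φ (e p) ^ 2 := sq_abs _
    nlinarith [abs_nonneg (c p), abs_nonneg (φ (e p))]
  have key : ∀ (E : Set ℝ), ∀ φ : H2 →L[ℝ] ℝ,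
      Integrable (fun t => φ (basicFun c A e t)) (volume.restrict (Set.Icc 0 1)) →
      HasSum (fun p => (((volume.restrict (Set.Icc (0:ℝ) 1)).restrict E) (A p)).toReal
          * φ (((volume (A p)).toReal)⁻¹ • (c p • e p)))
        (∫ t in E, φ (basicFun c A e t) ∂(volume.restrict (Set.Icc 0 1))) :=
    fun E φ hint => integral_basicFun A hAc hdisj c e _ φ hint.restrict
  have hinner : ∀ (d : Bidx → ℝ) (w : H2), HasSum (fun p => d p • e p) w →
      ∀ q, (inner ℝ (e q) w : ℝ) = d q := by
    intro d w hw q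
    have h1 := hw.mapL (innerSL ℝ (e q))
    have h2 : (fun p => (innerSL ℝ (e q)) (d p • e p))
        = fun p => if p = q then d q else 0 := by
      funext p
      rw [(innerSL ℝ (e q)).map_smul, smul_eq_mul, innerSL_apply_apply,
        orthonormal_iff_ite.mp he]
      rcases eq_or_ne p q with rfl | hpq
      · simp
      · simp [hpq, show ¬ q = p from fun h => hpq h.symm]
    rw [h2] at h1
    have h3 := h1.unique (hasSum_ite_eq q (d q))
    rw [← h3, innerSL_apply_apply]
  constructor
  · constructor
    · rintro ⟨hInt, hEx⟩
      obtain ⟨v, hv⟩ := hEx (Set.Icc 0 1) measurableSet_Icc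
      have hvc : ∀ q, (inner ℝ (e q) v : ℝ) = c q := by
        intro q
        have h1 := key (Set.Icc 0 1) (innerSL ℝ (e q)) (hInt _)
        have hv' := hv (innerSL ℝ (e q))
        rw [hrr] at h1 hv'
        rw [← hv'] at h1
        have h2 : (fun p => ((volume.restrict (Set.Icc (0:ℝ) 1)) (A p)).toReal *
            (innerSL ℝ (e q)) (((volume (A p)).toReal)⁻¹ • (c p • e p)))
            = fun p => if p = q then c q else 0 := by
          funext p
          rw [hμA p, (innerSL ℝ (e q)).map_smul, (innerSL ℝ (e q)).map_smul,
            smul_eq_mul, smul_eq_mul, innerSL_apply_apply, orthonormal_iff_ite.mp he]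
          rcases eq_or_ne p q with rfl | hpq
          · simp only [if_pos rfl]
            field_simp
            rw [if_pos trivial, if_pos trivial, mul_one, mul_div_cancel_left₀ _ (hvpos p).ne']
          · simp [hpq, show ¬ q = p from fun h => hpq h.symm]
        rw [h2] at h1
        have h3 := h1.unique (hasSum_ite_eq q (c q))
        rw [← h3, innerSL_apply_apply]
      refine (he.inner_products_summable (x := v)).congr fun p => ?_
      rw [Real.norm_eq_abs, sq_abs, hvc p]
    · intro hsum
      refine ⟨fun φ => integrable_basicFun A hAc hsub hApos hdisj c e φ (hCS hsum φ), ?_⟩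
      intro E hE
      set d : Bidx → ℝ := fun p =>
        (((volume.restrict (Set.Icc (0:ℝ) 1)).restrict E) (A p)).toReal
          * ((volume (A p)).toReal)⁻¹ * c p with hddef
      have hdle : ∀ p, d p ^ 2 ≤ c p ^ 2 := by
        intro p
        have h1 : (((volume.restrict (Set.Icc (0:ℝ) 1)).restrict E) (A p)).toReal
            ≤ (volume (A p)).toReal := by
          apply ENNReal.toReal_mono (hvfin p)
          calc ((volume.restrict (Set.Icc (0:ℝ) 1)).restrict E) (A p)
              ≤ (volume.restrict (Set.Icc (0:ℝ) 1)) (A p) :=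
              Measure.le_iff'.mp Measure.restrict_le_self (A p)
            _ = volume (A p) := hμA p
        have hr0 : 0 ≤ (((volume.restrict (Set.Icc (0:ℝ) 1)).restrict E) (A p)).toReal
            * ((volume (A p)).toReal)⁻¹ := by positivity
        have hr1 : (((volume.restrict (Set.Icc (0:ℝ) 1)).restrict E) (A p)).toReal
            * ((volume (A p)).toReal)⁻¹ ≤ 1 := by
          rw [← div_eq_mul_inv]
          exact (div_le_one (hvpos p)).mpr h1
        have hr2 : ((((volume.restrict (Set.Icc (0:ℝ) 1)).restrict E) (A p)).toReal
            * ((volume (A p)).toReal)⁻¹) ^ 2 ≤ 1 := by nlinarith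
        calc d p ^ 2 = ((((volume.restrict (Set.Icc (0:ℝ) 1)).restrict E) (A p)).toReal
              * ((volume (A p)).toReal)⁻¹) ^ 2 * c p ^ 2 := by rw [hddef]; ring
          _ ≤ 1 * c p ^ 2 := mul_le_mul_of_nonneg_right hr2 (sq_nonneg _)
          _ = c p ^ 2 := one_mul _
      have hds : Summable fun p => d p ^ 2 :=
        Summable.of_nonneg_of_le (fun p => sq_nonneg _) hdle hsum
      have hw := (orthonormal_summable_smul he hds).hasSum
      refine ⟨∑' p, d p • e p, fun φ => ?_⟩
      have h1 := key E φ (integrable_basicFun A hAc hsub hApos hdisj c e φ (hCS hsum φ))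
      have h2 := hw.mapL φ
      have h3 : (fun p => φ (d p • e p)) = fun p =>
          (((volume.restrict (Set.Icc (0:ℝ) 1)).restrict E) (A p)).toReal
            * φ (((volume (A p)).toReal)⁻¹ • (c p • e p)) := by
        funext p
        rw [φ.map_smul, φ.map_smul, φ.map_smul, smul_eq_mul, smul_eq_mul, smul_eq_mul, hddef]
        ring
      rw [h3] at h2
      exact h2.unique h1
  · intro hsum v hv
    have hw := (orthonormal_summable_smul he hsum).hasSum
    have hveq : ∀ φ : H2 →L[ℝ] ℝ, φ v = φ (∑' p, c p • e p) := by
      intro φ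
      have h1 := key (Set.Icc 0 1) φ (integrable_basicFun A hAc hsub hApos hdisj c e φ (hCS hsum φ))
      have hv' := hv φ
      rw [hrr] at h1 hv'
      rw [← hv'] at h1
      have h2 := hw.mapL φ
      have h3 : (fun p => φ (c p • e p)) = fun p =>
          ((volume.restrict (Set.Icc (0:ℝ) 1)) (A p)).toReal
            * φ (((volume (A p)).toReal)⁻¹ • (c p • e p)) := by
        funext p
        rw [hμA p, φ.map_smul, φ.map_smul, smul_eq_mul, smul_eq_mul]
        field_simp
        rw [mul_comm ((volume (A p)).toReal), mul_div_assoc, div_self (hvpos p).ne', mul_one]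
        rw [φ.map_smul, smul_eq_mul]
      rw [h3] at h2
      exact h1.unique h2
    have hvv : v = ∑' p, c p • e p := by
      have h := hveq (innerSL ℝ (v - ∑' p, c p • e p))
      rw [innerSL_apply_apply, innerSL_apply_apply] at h
      have h2 : (inner ℝ (v - ∑' p, c p • e p) (v - ∑' p, c p • e p) : ℝ) = 0 := by
        rw [inner_sub_right, h, sub_self]
      rw [inner_self_eq_zero, sub_eq_zero] at h2
      exact h2
    have hip : ∀ q, (inner ℝ (e q) (∑' p, c p • e p) : ℝ) = c q :=
      hinner c _ hw
    have hnorm2 : ‖(∑' p, c p • e p : H2)‖ ^ 2 = ∑' p, c p ^ 2 := by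
      have h2 := hw.mapL (innerSL ℝ (∑' p, c p • e p))
      have h3 : (fun p => (innerSL ℝ (∑' p, c p • e p)) (c p • e p))
          = fun p => c p ^ 2 := by
        funext p
        rw [(innerSL ℝ (∑' p, c p • e p)).map_smul, smul_eq_mul, innerSL_apply_apply,
          real_inner_comm, hip p]
        ring
      rw [h3] at h2
      have h4 : (innerSL ℝ (∑' p, c p • e p)) (∑' p, c p • e p)
          = ‖(∑' p, c p • e p : H2)‖ ^ 2 := by
        rw [innerSL_apply_apply, real_inner_self_eq_norm_sq]
      rw [h4] at h2
      exact h2.tsum_eq.symm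
    rw [hvv, ← hnorm2, Real.sqrt_sq (norm_nonneg _)]
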